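/- arXiv:2001.04364 — 2 statements merged into one kernel-verified Lean document; each statement's English description precedes it below -/
import Mathlib

section
/- For all real numbers x, y > 0, one has (8/π) ∫₀^∞ x y t²/((x² + t²)² (y² + t²)) dt = 2y/(x + y)², and moreover 2y/(x + y)² ≤ 1/(2x). -/
open MeasureTheory Real Filter

lemma arctan_deriv_aux (a : ℝ) (ha : 0 < a) (t : ℝ) :
    HasDerivAt (fun s => arctan (s / a)) (a / (a ^ 2 + t ^ 2)) t := by
  have h := (Real.hasDerivAt_arctan (t / a)).comp t ((hasDerivAt_id t).div_const a)
  refine h.congr_deriv ?_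
  have h1 : (1 : ℝ) + (t / a) ^ 2 ≠ 0 := by positivity
  field_simp

lemma arctan_tendsto_aux (a : ℝ) (ha : 0 < a) :
    Tendsto (fun s : ℝ => arctan (s / a)) atTop (nhds (π / 2)) := by
  exact (tendsto_nhds_of_tendsto_nhdsWithin Real.tendsto_arctan_atTop).comp
    (tendsto_id.atTop_div_const ha)

lemma rat_tendsto_aux (a : ℝ) (ha : 0 < a) :
    Tendsto (fun s : ℝ => s / (a ^ 2 + s ^ 2)) atTop (nhds 0) := by
  have h : Tendsto (fun s : ℝ => a ^ 2 / s + s) atTop atTop :=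
    (Tendsto.div_atTop tendsto_const_nhds tendsto_id).add_atTop tendsto_id
  refine h.inv_tendsto_atTop.congr' ?_
  filter_upwards [eventually_gt_atTop (0 : ℝ)] with s hs
  have hne : a ^ 2 + s ^ 2 ≠ 0 := by positivity
  simp only [Pi.inv_apply]
  field_simp

lemma rat2_tendsto_aux (a : ℝ) (ha : 0 < a) :
    Tendsto (fun s : ℝ => s / (a ^ 2 + s ^ 2) ^ 2) atTop (nhds 0) := by
  have h1 := rat_tendsto_aux a ha
  have h2 : Tendsto (fun s : ℝ => (a ^ 2 + s ^ 2)⁻¹) atTop (nhds 0) := by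
    refine Tendsto.inv_tendsto_atTop ?_
    exact tendsto_atTop_add_const_left _ _ (tendsto_pow_atTop two_ne_zero)
  have := h1.mul h2
  rw [mul_zero] at this
  refine this.congr fun s => ?_
  have hne : a ^ 2 + s ^ 2 ≠ 0 := by positivity
  field_simp

lemma rat_deriv_aux (a : ℝ) (ha : 0 < a) (t : ℝ) :
    HasDerivAt (fun s => s / (a ^ 2 + s ^ 2)) ((a ^ 2 - t ^ 2) / (a ^ 2 + t ^ 2) ^ 2) t := by
  have hne : a ^ 2 + t ^ 2 ≠ 0 := by positivity
  have h := (hasDerivAt_id t).div ((hasDerivAt_pow 2 t).const_add (a ^ 2)) hne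
  refine h.congr_deriv ?_
  simp only [id, Pi.pow_apply]
  field_simp
  ring

lemma rat2_deriv_aux (a : ℝ) (ha : 0 < a) (t : ℝ) :
    HasDerivAt (fun s => s / (a ^ 2 + s ^ 2) ^ 2)
      ((a ^ 2 - 3 * t ^ 2) / (a ^ 2 + t ^ 2) ^ 3) t := by
  have hne : a ^ 2 + t ^ 2 ≠ 0 := by positivity
  have hne2 : (a ^ 2 + t ^ 2) ^ 2 ≠ 0 := pow_ne_zero _ hne
  have h := (hasDerivAt_id t).div
    (((hasDerivAt_pow 2 t).const_add (a ^ 2)).pow 2) hne2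
  refine h.congr_deriv ?_
  simp only [id, Pi.pow_apply]
  field_simp
  ring

/-- For all `x, y > 0`, `(8/π) ∫₀^∞ x y t² / ((x² + t²)² (y² + t²)) dt = 2y/(x+y)²`,
and `2y/(x+y)² ≤ 1/(2x)`. -/
theorem stmt_2 (x y : ℝ) (hx : 0 < x) (hy : 0 < y) :
    (8 / π) * (∫ t in Set.Ioi (0 : ℝ),
        x * y * t ^ 2 / ((x ^ 2 + t ^ 2) ^ 2 * (y ^ 2 + t ^ 2))) = 2 * y / (x + y) ^ 2 ∧
    2 * y / (x + y) ^ 2 ≤ 1 / (2 * x) := by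
  have hπ : (0 : ℝ) < π := Real.pi_pos
  constructor
  · have hpos : ∀ t ∈ Set.Ioi (0 : ℝ),
        0 ≤ x * y * t ^ 2 / ((x ^ 2 + t ^ 2) ^ 2 * (y ^ 2 + t ^ 2)) := by
      intro t _; positivity
    rcases eq_or_ne x y with rfl | hxy
    · -- case y = x
      set g : ℝ → ℝ := fun t => (1 / (8 * x)) * arctan (t / x)
        + (1 / 8) * (t / (x ^ 2 + t ^ 2)) + (-(x ^ 2) / 4) * (t / (x ^ 2 + t ^ 2) ^ 2) with hg
      have hderiv : ∀ t ∈ Set.Ici (0 : ℝ),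
          HasDerivAt g (x * x * t ^ 2 / ((x ^ 2 + t ^ 2) ^ 2 * (x ^ 2 + t ^ 2))) t := by
        intro t _
        have h := (((arctan_deriv_aux x hx t).const_mul (1 / (8 * x))).add
            ((rat_deriv_aux x hx t).const_mul (1 / 8))).add
            ((rat2_deriv_aux x hx t).const_mul (-(x ^ 2) / 4))
        refine h.congr_deriv ?_
        have hne : x ^ 2 + t ^ 2 ≠ 0 := by positivity
        field_simp
        try ring
        try tauto
      have htend : Tendsto g atTop (nhds (π / (16 * x))) := by
        have h := (((arctan_tendsto_aux x hx).const_mul (1 / (8 * x))).add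
            ((rat_tendsto_aux x hx).const_mul (1 / 8))).add
            ((rat2_tendsto_aux x hx).const_mul (-(x ^ 2) / 4))
        convert h using 1
        field_simp
        try ring
        try tauto
      have key := integral_Ioi_of_hasDerivAt_of_nonneg' hderiv hpos htend
      rw [key, hg]
      simp only [zero_div, Real.arctan_zero]
      have hxne : x + x ≠ 0 := by positivity
      field_simp
      try ring
      try tauto
    · -- case x ≠ y
      have hxy2 : x ^ 2 - y ^ 2 ≠ 0 := by
        intro h
        apply hxy
        nlinarith [sq_nonneg (x - y), sq_nonneg (x + y)]
      set c1 : ℝ := y * (x ^ 2 + y ^ 2) / (2 * (x ^ 2 - y ^ 2) ^ 2) with hc1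
      set c2 : ℝ := -(x * y ^ 2) / (x ^ 2 - y ^ 2) ^ 2 with hc2
      set c3 : ℝ := x * y / (2 * (x ^ 2 - y ^ 2)) with hc3
      set g : ℝ → ℝ := fun t => c1 * arctan (t / x) + c2 * arctan (t / y)
        + c3 * (t / (x ^ 2 + t ^ 2)) with hg
      have hderiv : ∀ t ∈ Set.Ici (0 : ℝ),
          HasDerivAt g (x * y * t ^ 2 / ((x ^ 2 + t ^ 2) ^ 2 * (y ^ 2 + t ^ 2))) t := by
        intro t _
        have h := (((arctan_deriv_aux x hx t).const_mul c1).add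
            ((arctan_deriv_aux y hy t).const_mul c2)).add
            ((rat_deriv_aux x hx t).const_mul c3)
        refine h.congr_deriv ?_
        have hne1 : x ^ 2 + t ^ 2 ≠ 0 := by positivity
        have hne2 : y ^ 2 + t ^ 2 ≠ 0 := by positivity
        rw [hc1, hc2, hc3]
        field_simp
        try ring
        try tauto
      have htend : Tendsto g atTop (nhds (π * y / (4 * (x + y) ^ 2))) := by
        have h := (((arctan_tendsto_aux x hx).const_mul c1).add
            ((arctan_tendsto_aux y hy).const_mul c2)).add
            ((rat_tendsto_aux x hx).const_mul c3)
        convert h using 2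
        have hxyne : x + y ≠ 0 := by positivity
        rw [hc1, hc2, mul_zero, add_zero]
        field_simp
        try ring
        try tauto
      have key := integral_Ioi_of_hasDerivAt_of_nonneg' hderiv hpos htend
      rw [key, hg]
      simp only [zero_div, Real.arctan_zero]
      have hxyne : x + y ≠ 0 := by positivity
      field_simp
      try ring
      try tauto
  · rw [div_le_div_iff₀ (by positivity) (by positivity)]
    nlinarith [sq_nonneg (x - y)]
end

section
/- Let D be a positive self-adjoint operator with compact resolvent on a separable Hilbert space, with eigenvalues D_j > 0 and orthonormal eigenbasis (φ_j), and let K be a self-adjoint Hilbert–Schmidt operator. Then (8/π) ∫₀^∞ Tr( D(D²+t²)⁻² K D(D²+t²)⁻¹ K ) t² dt = Σ_{i,j} |⟨φ_i, K φ_j⟩|² · 2D_i/(D_i+D_j)² ≤ (1/2) Tr(K D⁻¹ K). -/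
open MeasureTheory Real Filter Topology
open scoped InnerProductSpace

lemma hasDerivAt_arctan_div (a : ℝ) (ha : 0 < a) (t : ℝ) :
    HasDerivAt (fun s : ℝ => Real.arctan (s / a)) (a / (a ^ 2 + t ^ 2)) t := by
  have h := (Real.hasDerivAt_arctan (t / a)).comp t ((hasDerivAt_id t).div_const a)
  refine h.congr_deriv ?_
  have h1 : (1 : ℝ) + (t / a) ^ 2 ≠ 0 := by positivity
  field_simp

lemma tendsto_arctan_div (a : ℝ) (ha : 0 < a) :
    Tendsto (fun t : ℝ => Real.arctan (t / a)) atTop (𝓝 (π / 2)) :=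
  (tendsto_nhds_of_tendsto_nhdsWithin Real.tendsto_arctan_atTop).comp
    (tendsto_id.atTop_div_const ha)

lemma tendsto_rat_aux (b : ℝ) (hb : 0 < b) (k : ℕ) (hk : 1 ≤ k) :
    Tendsto (fun t : ℝ => t / (t ^ 2 + b ^ 2) ^ k) atTop (𝓝 0) := by
  apply squeeze_zero' (g := fun t : ℝ => t⁻¹)
  · filter_upwards [eventually_ge_atTop (0 : ℝ)] with t ht
    positivity
  · filter_upwards [eventually_ge_atTop (1 : ℝ)] with t ht
    have h1 : (0 : ℝ) < t := lt_of_lt_of_le one_pos ht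
    have h2 : t ^ 2 ≤ (t ^ 2 + b ^ 2) ^ k := by
      calc t ^ 2 ≤ t ^ 2 + b ^ 2 := le_add_of_nonneg_right (by positivity)
        _ ≤ (t ^ 2 + b ^ 2) ^ k := le_self_pow₀ (by nlinarith) (by omega)
    calc t / (t ^ 2 + b ^ 2) ^ k ≤ t / t ^ 2 := by
          apply div_le_div_of_nonneg_left h1.le (by positivity) h2
      _ = t⁻¹ := by field_simp [pow_two]
  · exact tendsto_inv_atTop_zero

lemma sq_add_hasDerivAt (b t : ℝ) : HasDerivAt (fun s : ℝ => s ^ 2 + b ^ 2) (2 * t) t := by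
  simpa using (hasDerivAt_pow 2 t).add_const (b ^ 2)

lemma core_integral (a b : ℝ) (ha : 0 < a) (hb : 0 < b) :
    IntegrableOn (fun t : ℝ => b / (b ^ 2 + t ^ 2) ^ 2 * (a / (a ^ 2 + t ^ 2)) * t ^ 2)
      (Set.Ioi 0) ∧
    ∫ t in Set.Ioi (0 : ℝ), b / (b ^ 2 + t ^ 2) ^ 2 * (a / (a ^ 2 + t ^ 2)) * t ^ 2
      = π * a / (4 * (a + b) ^ 2) := by
  set f : ℝ → ℝ := fun t => b / (b ^ 2 + t ^ 2) ^ 2 * (a / (a ^ 2 + t ^ 2)) * t ^ 2 with hf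
  have hfpos : ∀ x ∈ Set.Ioi (0 : ℝ), 0 ≤ f x := by
    intro x _
    have h1 : (0:ℝ) < (b ^ 2 + x ^ 2) := by positivity
    have h2 : (0:ℝ) < (a ^ 2 + x ^ 2) := by positivity
    positivity
  rcases eq_or_ne a b with rfl | hab
  · -- diagonal case
    set F : ℝ → ℝ := fun t =>
      t / (8 * (t ^ 2 + a ^ 2)) + Real.arctan (t / a) / (8 * a)
        - a ^ 2 * t / (4 * (t ^ 2 + a ^ 2) ^ 2) with hF
    have hderiv : ∀ t : ℝ, HasDerivAt F (f t) t := by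
      intro t
      have hd1 : HasDerivAt (fun s : ℝ => s / (8 * (s ^ 2 + a ^ 2)))
          ((1 * (8 * (t ^ 2 + a ^ 2)) - t * (8 * (2 * t))) / (8 * (t ^ 2 + a ^ 2)) ^ 2) t :=
        (hasDerivAt_id t).div ((sq_add_hasDerivAt a t).const_mul 8) (by positivity)
      have hd2 : HasDerivAt (fun s : ℝ => Real.arctan (s / a) / (8 * a))
          ((a / (a ^ 2 + t ^ 2)) / (8 * a)) t :=
        (hasDerivAt_arctan_div a ha t).div_const (8 * a)
      have hdsq : HasDerivAt (fun s : ℝ => (s ^ 2 + a ^ 2) ^ 2)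
          (2 * (t ^ 2 + a ^ 2) * (2 * t)) t := by
        have h := (sq_add_hasDerivAt a t).pow 2
        simp at h
        exact h
      have hd3 := (((hasDerivAt_id t).const_mul (a ^ 2))).div (hdsq.const_mul 4)
        (show (4 * (t ^ 2 + a ^ 2) ^ 2) ≠ 0 by positivity)
      have h := (hd1.add hd2).sub hd3
      refine h.congr_deriv ?_
      have h3 : (t ^ 2 + a ^ 2) ≠ 0 := by positivity
      have ha' : a ≠ 0 := ha.ne'
      rw [hf, show a ^ 2 + t ^ 2 = t ^ 2 + a ^ 2 from by ring]
      simp only [id]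
      field_simp
      ring
    have htends : Tendsto F atTop (𝓝 (0 / 8 + (π / 2) / (8 * a) - a ^ 2 / 4 * 0)) := by
      have t1 : Tendsto (fun t : ℝ => t / (8 * (t ^ 2 + a ^ 2))) atTop (𝓝 (0 / 8)) := by
        have := (tendsto_rat_aux a ha 1 le_rfl).div_const 8
        refine this.congr fun t => ?_
        rw [pow_one, div_div, mul_comm]
      have t2 := (tendsto_arctan_div a ha).div_const (8 * a)
      have t3 : Tendsto (fun t : ℝ => a ^ 2 * t / (4 * (t ^ 2 + a ^ 2) ^ 2))
          (atTop) (𝓝 (a ^ 2 / 4 * 0)) := by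
        have := ((tendsto_rat_aux a ha 2 one_le_two).const_mul (a ^ 2 / 4))
        refine this.congr fun t => ?_
        rw [div_mul_eq_mul_div, mul_div_assoc, div_div, mul_comm (4:ℝ)]
        ring
      exact (t1.add t2).sub t3
    have hF0 : F 0 = 0 := by simp [hF]
    constructor
    · exact integrableOn_Ioi_deriv_of_nonneg' (fun x _ => hderiv x) hfpos htends
    · rw [integral_Ioi_of_hasDerivAt_of_nonneg' (fun x _ => hderiv x) hfpos htends, hF0]
      rw [sub_zero]
      field_simp
      ring
  · -- off-diagonal case
    have hba : b ^ 2 - a ^ 2 ≠ 0 := by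
      intro h
      rcases mul_eq_zero.mp (show (b - a) * (b + a) = 0 by nlinarith) with h' | h'
      · exact hab (by linarith)
      · nlinarith
    set c1 : ℝ := -a ^ 2 * b / (b ^ 2 - a ^ 2) ^ 2 with hc1
    set c2 : ℝ := a ^ 3 / (b ^ 2 - a ^ 2) ^ 2 + a / (2 * (b ^ 2 - a ^ 2)) with hc2
    set c3 : ℝ := a * b / (2 * (b ^ 2 - a ^ 2)) with hc3
    set F : ℝ → ℝ := fun t =>
      c1 * Real.arctan (t / a) + c2 * Real.arctan (t / b) + c3 * (t / (t ^ 2 + b ^ 2)) with hF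
    have hderiv : ∀ t : ℝ, HasDerivAt F (f t) t := by
      intro t
      have hd1 := (hasDerivAt_arctan_div a ha t).const_mul c1
      have hd2 := (hasDerivAt_arctan_div b hb t).const_mul c2
      have hd3 : HasDerivAt (fun s : ℝ => c3 * (s / (s ^ 2 + b ^ 2)))
          (c3 * ((1 * (t ^ 2 + b ^ 2) - t * (2 * t)) / (t ^ 2 + b ^ 2) ^ 2)) t :=
        ((hasDerivAt_id t).div (sq_add_hasDerivAt b t) (by positivity)).const_mul c3
      have h := (hd1.add hd2).add hd3
      refine h.congr_deriv ?_
      have h2 : (a ^ 2 + t ^ 2) ≠ 0 := by positivity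
      have h3 : (b ^ 2 + t ^ 2) ≠ 0 := by positivity
      have h4 : (t ^ 2 + b ^ 2) ≠ 0 := by positivity
      have ha' : a ≠ 0 := ha.ne'
      have hb' : b ≠ 0 := hb.ne'
      rw [hc1, hc2, hc3, hf, show a ^ 2 + t ^ 2 = t ^ 2 + a ^ 2 from by ring,
        show b ^ 2 + t ^ 2 = t ^ 2 + b ^ 2 from by ring]
      field_simp
      ring
    have htends : Tendsto F atTop (𝓝 (c1 * (π / 2) + c2 * (π / 2) + c3 * 0)) := by
      have t3 : Tendsto (fun t : ℝ => c3 * (t / (t ^ 2 + b ^ 2))) atTop (𝓝 (c3 * 0)) := by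
        have := (tendsto_rat_aux b hb 1 le_rfl).const_mul c3
        refine this.congr fun t => ?_
        rw [pow_one]
      exact ((((tendsto_arctan_div a ha).const_mul c1).add
        ((tendsto_arctan_div b hb).const_mul c2)).add t3)
    have hF0 : F 0 = 0 := by simp [hF]
    constructor
    · exact integrableOn_Ioi_deriv_of_nonneg' (fun x _ => hderiv x) hfpos htends
    · rw [integral_Ioi_of_hasDerivAt_of_nonneg' (fun x _ => hderiv x) hfpos htends, hF0]
      rw [sub_zero, hc1, hc2, hc3]
      have hapb : a + b ≠ 0 := by positivity
      field_simp
      ring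


/-- Trace computation for the second-order Bogoliubov term. `D` is a positive self-adjoint
operator with compact resolvent, represented by its spectral data: an orthonormal
eigenbasis `(e j)` with eigenvalues `Dj j ≥ c > 0`; `K` is a self-adjoint Hilbert–Schmidt
operator. All traces are written out in the eigenbasis of `D`:
`(8/π) ∫₀^∞ Tr(D(D²+t²)⁻² K D(D²+t²)⁻¹ K) t² dt
  = Σ_{i,j} |⟨eᵢ, K eⱼ⟩|² · 2Dᵢ/(Dᵢ+Dⱼ)² ≤ (1/2) Tr(K D⁻¹ K)`. -/
theorem stmt_19 {𝓗 : Type*} [NormedAddCommGroup 𝓗] [InnerProductSpace ℂ 𝓗] [CompleteSpace 𝓗]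
    (e : HilbertBasis ℕ ℂ 𝓗) (Dj : ℕ → ℝ) (c : ℝ) (hc : 0 < c) (hD : ∀ j, c ≤ Dj j)
    (K : 𝓗 →L[ℂ] 𝓗) (hK : IsSelfAdjoint K)
    (hHS : Summable (fun p : ℕ × ℕ => ‖⟪e p.1, K (e p.2)⟫_ℂ‖ ^ 2)) :
    (8 / π) * (∫ t in Set.Ioi (0 : ℝ),
        ∑' p : ℕ × ℕ, ‖⟪e p.1, K (e p.2)⟫_ℂ‖ ^ 2 *
          (Dj p.2 / (Dj p.2 ^ 2 + t ^ 2) ^ 2) * (Dj p.1 / (Dj p.1 ^ 2 + t ^ 2)) * t ^ 2) =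
      (∑' p : ℕ × ℕ, ‖⟪e p.1, K (e p.2)⟫_ℂ‖ ^ 2 * (2 * Dj p.1 / (Dj p.1 + Dj p.2) ^ 2)) ∧
    (∑' p : ℕ × ℕ, ‖⟪e p.1, K (e p.2)⟫_ℂ‖ ^ 2 * (2 * Dj p.1 / (Dj p.1 + Dj p.2) ^ 2)) ≤
      (1 / 2) * ∑' p : ℕ × ℕ, ‖⟪e p.1, K (e p.2)⟫_ℂ‖ ^ 2 / Dj p.2 := by
  have hOK : ∀ j, 0 < Dj j := fun j => hc.trans_le (hD j)
  have hπ : (0 : ℝ) < π := Real.pi_pos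
  -- nonnegativity of the integrand
  have hnonneg : ∀ (p : ℕ × ℕ) (t : ℝ),
      0 ≤ ‖⟪e p.1, K (e p.2)⟫_ℂ‖ ^ 2 *
        (Dj p.2 / (Dj p.2 ^ 2 + t ^ 2) ^ 2) * (Dj p.1 / (Dj p.1 ^ 2 + t ^ 2)) * t ^ 2 := by
    intro p t
    exact mul_nonneg (mul_nonneg (mul_nonneg (by positivity)
      (div_nonneg (hOK p.2).le (by positivity))) (div_nonneg (hOK p.1).le (by positivity)))
      (sq_nonneg t)
  -- integrability
  have hint : ∀ p : ℕ × ℕ, Integrable (fun t : ℝ => ‖⟪e p.1, K (e p.2)⟫_ℂ‖ ^ 2 *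
      (Dj p.2 / (Dj p.2 ^ 2 + t ^ 2) ^ 2) * (Dj p.1 / (Dj p.1 ^ 2 + t ^ 2)) * t ^ 2)
      (volume.restrict (Set.Ioi 0)) := by
    intro p
    have h := ((core_integral (Dj p.1) (Dj p.2) (hOK p.1) (hOK p.2)).1.const_mul
      (‖⟪e p.1, K (e p.2)⟫_ℂ‖ ^ 2))
    exact h.congr (Filter.EventuallyEq.of_eq (funext fun t => by ring))
  -- value of each integral
  have hval : ∀ p : ℕ × ℕ, ∫ t in Set.Ioi (0 : ℝ), ‖⟪e p.1, K (e p.2)⟫_ℂ‖ ^ 2 *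
      (Dj p.2 / (Dj p.2 ^ 2 + t ^ 2) ^ 2) * (Dj p.1 / (Dj p.1 ^ 2 + t ^ 2)) * t ^ 2
      = ‖⟪e p.1, K (e p.2)⟫_ℂ‖ ^ 2 * (π * Dj p.1 / (4 * (Dj p.1 + Dj p.2) ^ 2)) := by
    intro p
    rw [show (fun t : ℝ => ‖⟪e p.1, K (e p.2)⟫_ℂ‖ ^ 2 *
        (Dj p.2 / (Dj p.2 ^ 2 + t ^ 2) ^ 2) * (Dj p.1 / (Dj p.1 ^ 2 + t ^ 2)) * t ^ 2)
      = fun t : ℝ => ‖⟪e p.1, K (e p.2)⟫_ℂ‖ ^ 2 *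
        (Dj p.2 / (Dj p.2 ^ 2 + t ^ 2) ^ 2 * (Dj p.1 / (Dj p.1 ^ 2 + t ^ 2)) * t ^ 2)
      from funext fun t => by ring]
    rw [integral_const_mul, (core_integral (Dj p.1) (Dj p.2) (hOK p.1) (hOK p.2)).2]
  -- summability of the integrals
  have hbound : ∀ p : ℕ × ℕ,
      π * Dj p.1 / (4 * (Dj p.1 + Dj p.2) ^ 2) ≤ π / (16 * c) := by
    intro p
    have h1 := hOK p.1
    have h2 := hOK p.2
    have hcb := hD p.2
    rw [div_le_div_iff₀ (by positivity) (by positivity)]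
    nlinarith [mul_nonneg (mul_nonneg hπ.le h1.le) (sub_nonneg.mpr hcb),
      mul_nonneg hπ.le (sq_nonneg (Dj p.1 - Dj p.2))]
  have hsumnorm : Summable fun p : ℕ × ℕ => ∫ t in Set.Ioi (0 : ℝ),
      ‖‖⟪e p.1, K (e p.2)⟫_ℂ‖ ^ 2 *
        (Dj p.2 / (Dj p.2 ^ 2 + t ^ 2) ^ 2) * (Dj p.1 / (Dj p.1 ^ 2 + t ^ 2)) * t ^ 2‖ := by
    have hn : ∀ p : ℕ × ℕ, (∫ t in Set.Ioi (0 : ℝ),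
        ‖‖⟪e p.1, K (e p.2)⟫_ℂ‖ ^ 2 *
          (Dj p.2 / (Dj p.2 ^ 2 + t ^ 2) ^ 2) * (Dj p.1 / (Dj p.1 ^ 2 + t ^ 2)) * t ^ 2‖)
        = ‖⟪e p.1, K (e p.2)⟫_ℂ‖ ^ 2 * (π * Dj p.1 / (4 * (Dj p.1 + Dj p.2) ^ 2)) := by
      intro p
      rw [← hval p]
      exact integral_congr_ae (Filter.EventuallyEq.of_eq (funext fun t =>
        Real.norm_of_nonneg (hnonneg p t)))
    rw [funext hn]
    apply Summable.of_nonneg_of_le (f := fun p : ℕ × ℕ =>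
        ‖⟪e p.1, K (e p.2)⟫_ℂ‖ ^ 2 * (π / (16 * c)))
      (fun p => mul_nonneg (by positivity)
        (div_nonneg (mul_nonneg hπ.le (hOK p.1).le) (by positivity)))
      (fun p => mul_le_mul_of_nonneg_left (hbound p) (by positivity))
      (hHS.mul_right _)
  have interchange : (∑' p : ℕ × ℕ, ∫ t in Set.Ioi (0 : ℝ),
        ‖⟪e p.1, K (e p.2)⟫_ℂ‖ ^ 2 *
          (Dj p.2 / (Dj p.2 ^ 2 + t ^ 2) ^ 2) * (Dj p.1 / (Dj p.1 ^ 2 + t ^ 2)) * t ^ 2)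
      = ∫ t in Set.Ioi (0 : ℝ), ∑' p : ℕ × ℕ, ‖⟪e p.1, K (e p.2)⟫_ℂ‖ ^ 2 *
          (Dj p.2 / (Dj p.2 ^ 2 + t ^ 2) ^ 2) * (Dj p.1 / (Dj p.1 ^ 2 + t ^ 2)) * t ^ 2 :=
    integral_tsum_of_summable_integral_norm hint hsumnorm
  constructor
  · rw [← interchange, ← tsum_mul_left]
    refine tsum_congr fun p => ?_
    rw [hval p]
    have h1 := hOK p.1
    have h2 := hOK p.2
    have hab : (0 : ℝ) < Dj p.1 + Dj p.2 := by positivity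
    have hπ' : π ≠ 0 := hπ.ne'
    field_simp
    ring
  · have hterm : ∀ p : ℕ × ℕ,
        ‖⟪e p.1, K (e p.2)⟫_ℂ‖ ^ 2 * (2 * Dj p.1 / (Dj p.1 + Dj p.2) ^ 2)
          ≤ ‖⟪e p.1, K (e p.2)⟫_ℂ‖ ^ 2 * (1 / (2 * Dj p.2)) := by
      intro p
      have h1 := hOK p.1
      have h2 := hOK p.2
      refine mul_le_mul_of_nonneg_left ?_ (by positivity)
      rw [div_le_div_iff₀ (by positivity) (by positivity)]
      nlinarith [sq_nonneg (Dj p.1 - Dj p.2)]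
    have hbd2 : ∀ p : ℕ × ℕ,
        ‖⟪e p.1, K (e p.2)⟫_ℂ‖ ^ 2 * (1 / (2 * Dj p.2))
          ≤ ‖⟪e p.1, K (e p.2)⟫_ℂ‖ ^ 2 * (1 / (2 * c)) := by
      intro p
      have h2 := hOK p.2
      refine mul_le_mul_of_nonneg_left ?_ (by positivity)
      apply one_div_le_one_div_of_le (by positivity)
      linarith [hD p.2]
    have s1 : Summable fun p : ℕ × ℕ =>
        ‖⟪e p.1, K (e p.2)⟫_ℂ‖ ^ 2 * (2 * Dj p.1 / (Dj p.1 + Dj p.2) ^ 2) := by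
      apply Summable.of_nonneg_of_le
        (fun p => mul_nonneg (by positivity)
          (div_nonneg (by linarith [hOK p.1]) (sq_nonneg _)))
        (fun p => (hterm p).trans (hbd2 p))
        (hHS.mul_right (1 / (2 * c)))
    have s2 : Summable fun p : ℕ × ℕ =>
        ‖⟪e p.1, K (e p.2)⟫_ℂ‖ ^ 2 * (1 / (2 * Dj p.2)) := by
      apply Summable.of_nonneg_of_le
        (fun p => mul_nonneg (by positivity)
          (div_nonneg zero_le_one (by linarith [hOK p.2])))
        hbd2 (hHS.mul_right (1 / (2 * c)))
    calc (∑' p : ℕ × ℕ, ‖⟪e p.1, K (e p.2)⟫_ℂ‖ ^ 2 * (2 * Dj p.1 / (Dj p.1 + Dj p.2) ^ 2))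
        ≤ ∑' p : ℕ × ℕ, ‖⟪e p.1, K (e p.2)⟫_ℂ‖ ^ 2 * (1 / (2 * Dj p.2)) :=
          Summable.tsum_le_tsum hterm s1 s2
      _ = (1 / 2) * ∑' p : ℕ × ℕ, ‖⟪e p.1, K (e p.2)⟫_ℂ‖ ^ 2 / Dj p.2 := by
          rw [← tsum_mul_left]
          exact tsum_congr fun p => by ring
end
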